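/- In the temporal graph G constructed from a static graph G_I = (V_I, E_I) with |V_I| = n (as in the reduction from Maximum Independent Set), each temporal path p(V_i), for 1 ≤ i ≤ n+1, is colorful. -/

import Mathlib

/-- Colors of the reduction: `a i q` is the color `a_i^q` and `col i j` is the
color `c_{i,j}`; all these colors are pairwise distinct. -/
inductive Color where
  | a : ℕ → ℕ → Color
  | col : ℕ → ℕ → Color
deriving DecidableEq

/-- The coloring of vertex `v_{i,x}` in the reduction from `Max IS`
(adjacency given by `Adj` on vertices `1, …, n`). -/
def reductionColor (n : ℕ) (Adj : ℕ → ℕ → Bool) (i x : ℕ) : Color :=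
  if i = n + 1 then Color.a (n + 1) x
  else if x = 0 then Color.a i 0
  else if Adj i x then Color.col (min i x) (max i x)
  else Color.a i x

/-- Each temporal path `p(V_i)`, `1 ≤ i ≤ n+1`, is colorful: the colors of its
vertices `v_{i,0}, …, v_{i,n}` are pairwise distinct. -/
theorem pVi_colorful (n : ℕ) (Adj : ℕ → ℕ → Bool)
    (hsym : ∀ i j, Adj i j = Adj j i) (hirr : ∀ i, Adj i i = false)
    (i : ℕ) (hi1 : 1 ≤ i) (hi2 : i ≤ n + 1) :
    ((List.range (n + 1)).map (reductionColor n Adj i)).Nodup := by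
  apply List.Nodup.map_on _ List.nodup_range
  intro x hx y hy h
  unfold reductionColor at h
  by_cases hin : i = n + 1
  · simp [hin] at h; exact h
  · simp only [if_neg hin] at h
    by_cases hx0 : x = 0 <;> by_cases hy0 : y = 0
    · omega
    · rw [if_pos hx0, if_neg hy0] at h
      by_cases hAy : Adj i y <;> simp [hAy] at h
      omega
    · rw [if_neg hx0, if_pos hy0] at h
      by_cases hAx : Adj i x <;> simp [hAx] at h
      omega
    · rw [if_neg hx0, if_neg hy0] at h
      by_cases hAx : Adj i x <;> by_cases hAy : Adj i y <;>
        simp [hAx, hAy] at h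
      · have hxi' : x ≠ i := fun hc => by subst hc; simp [hirr] at hAx
        have hyi' : y ≠ i := fun hc => by subst hc; simp [hirr] at hAy
        omega
      · omega
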